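/- Let 0 < a < b < 1 and α > 0, and define g : [0,1] → ℝ piecewise by g(p) = α·p·(√((1−b)/b) − √((1−a)/a)) for p ≤ a; g(p) = α·(−2√(p(1−p)) + p·√((1−b)/b) + (1−p)·√(a/(1−a))) for a ≤ p ≤ b; and g(p) = α·(1−p)·(√(a/(1−a)) − √(b/(1−b))) for p ≥ b. Then g is convex and continuously differentiable on (0,1), and for every p ∈ (0,1) the liability vector q = S_g(p,·) = (g'(p), 0) + (g(p) − p·g'(p))·𝟙 satisfies (−q₁ + α√((1−b)/b))·(−q₂ + α√(a/(1−a))) = α². -/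

import Mathlib

noncomputable section

private def st12mid (α c d : ℝ) (p : ℝ) : ℝ :=
  α * (-2 * Real.sqrt (p * (1 - p)) + p * c + (1 - p) * d)

private def st12D (α c d : ℝ) (p : ℝ) : ℝ :=
  α * (Real.sqrt (p / (1 - p)) - Real.sqrt ((1 - p) / p) + c - d)

private lemma st12_sqrt_ratio (p : ℝ) (hp : 0 < p) (hp1 : p < 1) :
    Real.sqrt (p / (1 - p)) = p / Real.sqrt (p * (1 - p)) := by
  have h1 : (0:ℝ) < 1 - p := by linarith
  have h : p / (1 - p) = p ^ 2 / (p * (1 - p)) := by field_simp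
  rw [h, Real.sqrt_div (by positivity), Real.sqrt_sq hp.le]

private lemma st12_sqrt_ratio' (p : ℝ) (hp : 0 < p) (hp1 : p < 1) :
    Real.sqrt ((1 - p) / p) = (1 - p) / Real.sqrt (p * (1 - p)) := by
  have h := st12_sqrt_ratio (1 - p) (by linarith) (by linarith)
  simp only [show (1:ℝ) - (1 - p) = p by ring, mul_comm] at h
  rw [h, mul_comm]

private lemma st12_hasDerivAt_mid (α c d p : ℝ) (hp : 0 < p) (hp1 : p < 1) :
    HasDerivAt (st12mid α c d) (st12D α c d p) p := by
  have hpos : (0:ℝ) < p * (1 - p) := by nlinarith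
  have hs : 0 < Real.sqrt (p * (1 - p)) := Real.sqrt_pos.2 hpos
  have hq : HasDerivAt (fun x : ℝ => x * (1 - x)) (1 - 2 * p) p := by
    have h := (hasDerivAt_id p).mul ((hasDerivAt_const p (1:ℝ)).sub (hasDerivAt_id p))
    exact h.congr_deriv (by simp only [Pi.sub_apply, id_eq]; ring)
  have hsq := hq.sqrt (ne_of_gt hpos)
  have h2 : HasDerivAt (fun x : ℝ => -2 * Real.sqrt (x * (1 - x)) + x * c + (1 - x) * d)
      ((-2) * ((1 - 2 * p) / (2 * Real.sqrt (p * (1 - p)))) + 1 * c + (0 - 1) * d) p := by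
    exact ((hsq.const_mul (-2)).add ((hasDerivAt_id p).mul_const c)).add
      (((hasDerivAt_const p (1:ℝ)).sub (hasDerivAt_id p)).mul_const d)
  have h3 := h2.const_mul α
  have hval : st12D α c d p
      = α * ((-2) * ((1 - 2 * p) / (2 * Real.sqrt (p * (1 - p)))) + 1 * c + (0 - 1) * d) := by
    rw [st12D, st12_sqrt_ratio p hp hp1, st12_sqrt_ratio' p hp hp1]
    have hne : Real.sqrt (p * (1 - p)) ≠ 0 := ne_of_gt hs
    rw [show p / Real.sqrt (p*(1-p)) - (1-p) / Real.sqrt (p*(1-p))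
      = (-2) * ((1 - 2*p) / (2 * Real.sqrt (p*(1-p)))) by ring]
    ring
  rw [hval]
  exact h3

private lemma st12_glue {f f₁ f₂ : ℝ → ℝ} {x k : ℝ}
    (h1 : HasDerivWithinAt f₁ k (Set.Iic x) x) (h2 : HasDerivWithinAt f₂ k (Set.Ici x) x)
    (e1 : f =ᶠ[nhdsWithin x (Set.Iic x)] f₁) (e2 : f =ᶠ[nhdsWithin x (Set.Ici x)] f₂)
    (v1 : f x = f₁ x) (v2 : f x = f₂ x) :
    HasDerivAt f k x := by
  have H1 := h1.congr_of_eventuallyEq e1 v1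
  have H2 := h2.congr_of_eventuallyEq e2 v2
  have H := H1.union H2
  rw [Set.Iic_union_Ici] at H
  exact hasDerivWithinAt_univ.mp H

private lemma st12_val_a (α a c d e s : ℝ) (hs : s ≠ 0) (hs2 : s ^ 2 = a * (1 - a))
    (hd : d = a / s) (he : e = (1 - a) / s) :
    α * a * (c - e) = α * (-2 * s + a * c + (1 - a) * d) := by
  subst hd he
  field_simp
  linear_combination (2 * α) * hs2

private lemma st12_val_b (α b c d f s : ℝ) (hs : s ≠ 0) (hs2 : s ^ 2 = b * (1 - b))
    (hc : c = (1 - b) / s) (hf : f = b / s) :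
    α * (-2 * s + b * c + (1 - b) * d) = α * (1 - b) * (d - f) := by
  subst hc hf
  field_simp
  linear_combination (-2 * α) * hs2

private lemma st12_mid_inv (α c d p s : ℝ) (hs : s ≠ 0) (hs2 : s ^ 2 = p * (1 - p)) :
    (-(α * (p/s - (1-p)/s + c - d) + (α * (-2*s + p*c + (1-p)*d)
        - p * (α * (p/s - (1-p)/s + c - d)))) + α * c) *
      (-(α * (-2*s + p*c + (1-p)*d) - p * (α * (p/s - (1-p)/s + c - d))) + α * d) = α ^ 2 := by
  have h1 : -(α * (p/s - (1-p)/s + c - d) + (α * (-2*s + p*c + (1-p)*d)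
      - p * (α * (p/s - (1-p)/s + c - d)))) + α * c = α * ((1-p)/s) := by
    field_simp
    linear_combination (2*α) * hs2
  have h2 : -(α * (-2*s + p*c + (1-p)*d) - p * (α * (p/s - (1-p)/s + c - d))) + α * d
      = α * (p/s) := by
    field_simp
    linear_combination (2*α) * hs2
  rw [h1, h2]
  field_simp
  linear_combination (-α^2) * hs2

set_option maxHeartbeats 1000000 in
theorem statement12 (a b α : ℝ) (ha : 0 < a) (hab : a < b) (hb : b < 1) (hα : 0 < α)
    (g : ℝ → ℝ)
    (hg : ∀ p, g p =
      if p ≤ a then α * p * (Real.sqrt ((1 - b)/b) - Real.sqrt ((1 - a)/a))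
      else if p ≤ b then
        α * (-2 * Real.sqrt (p * (1 - p)) + p * Real.sqrt ((1 - b)/b)
          + (1 - p) * Real.sqrt (a/(1 - a)))
      else α * (1 - p) * (Real.sqrt (a/(1 - a)) - Real.sqrt (b/(1 - b)))) :
    ConvexOn ℝ (Set.Icc (0:ℝ) 1) g ∧
    ContDiffOn ℝ 1 g (Set.Ioo (0:ℝ) 1) ∧
    ∀ p ∈ Set.Ioo (0:ℝ) 1,
      (-(deriv g p + (g p - p * deriv g p)) + α * Real.sqrt ((1 - b)/b)) *
        (-(g p - p * deriv g p) + α * Real.sqrt (a/(1 - a))) = α ^ 2 := by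
  have hb0 : 0 < b := ha.trans hab
  have ha1 : a < 1 := hab.trans hb
  have h1a : (0:ℝ) < 1 - a := by linarith
  have h1b : (0:ℝ) < 1 - b := by linarith
  obtain ⟨c, hc⟩ : ∃ c, Real.sqrt ((1 - b)/b) = c := ⟨_, rfl⟩
  obtain ⟨d, hd⟩ : ∃ d, Real.sqrt (a/(1 - a)) = d := ⟨_, rfl⟩
  obtain ⟨e, he⟩ : ∃ e, Real.sqrt ((1 - a)/a) = e := ⟨_, rfl⟩
  obtain ⟨f, hf⟩ : ∃ f, Real.sqrt (b/(1 - b)) = f := ⟨_, rfl⟩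
  rw [hc, hd, he, hf] at hg
  rw [hc, hd]
  -- sqrt facts
  have hsa : 0 < Real.sqrt (a * (1 - a)) := Real.sqrt_pos.2 (by nlinarith)
  have hsb : 0 < Real.sqrt (b * (1 - b)) := Real.sqrt_pos.2 (by nlinarith)
  have hsa2 : Real.sqrt (a * (1 - a)) ^ 2 = a * (1 - a) := Real.sq_sqrt (by nlinarith)
  have hsb2 : Real.sqrt (b * (1 - b)) ^ 2 = b * (1 - b) := Real.sq_sqrt (by nlinarith)
  have hd' : d = a / Real.sqrt (a * (1 - a)) := by rw [← hd]; exact st12_sqrt_ratio a ha ha1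
  have he' : e = (1 - a) / Real.sqrt (a * (1 - a)) := by
    rw [← he]; exact st12_sqrt_ratio' a ha ha1
  have hf' : f = b / Real.sqrt (b * (1 - b)) := by rw [← hf]; exact st12_sqrt_ratio b hb0 hb
  have hc' : c = (1 - b) / Real.sqrt (b * (1 - b)) := by
    rw [← hc]; exact st12_sqrt_ratio' b hb0 hb
  have hed : e * d = 1 := by
    rw [← he, ← hd, ← Real.sqrt_mul (le_of_lt (div_pos h1a ha)),
      show (1 - a)/a * (a/(1 - a)) = 1 by field_simp, Real.sqrt_one]
  have hcf : c * f = 1 := by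
    rw [← hc, ← hf, ← Real.sqrt_mul (le_of_lt (div_pos h1b hb0)),
      show (1 - b)/b * (b/(1 - b)) = 1 by field_simp, Real.sqrt_one]
  -- values of D at the joints
  have hDa : st12D α c d a = α * (c - e) := by
    rw [st12D, hd, he]; ring
  have hDb : st12D α c d b = α * (f - d) := by
    rw [st12D, hf, hc]; ring
  -- matching of values at the joints
  have val_a : α * a * (c - e) = st12mid α c d a :=
    st12_val_a α a c d e _ (ne_of_gt hsa) hsa2 hd' he'
  have val_b : st12mid α c d b = α * (1 - b) * (d - f) :=
    st12_val_b α b c d f _ (ne_of_gt hsb) hsb2 hc' hf'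
  -- derivative of the linear pieces
  have hL1 : ∀ x : ℝ, HasDerivAt (fun y : ℝ => α * y * (c - e)) (α * (c - e)) x := by
    intro x
    have h := ((hasDerivAt_id x).const_mul α).mul_const (c - e)
    simpa using h
  have hL2 : ∀ x : ℝ, HasDerivAt (fun y : ℝ => α * (1 - y) * (d - f)) (-(α * (d - f))) x := by
    intro x
    have h := (((hasDerivAt_const x (1:ℝ)).sub (hasDerivAt_id x)).const_mul α).mul_const (d - f)
    exact h.congr_deriv (by ring)
  -- the derivative of g everywhere in (0,1)
  have key : ∀ p ∈ Set.Ioo (0:ℝ) 1, HasDerivAt g (st12D α c d (max a (min b p))) p := by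
    rintro p ⟨hp0, hp1⟩
    rcases lt_trichotomy p a with hpa | hpa | hpa
    · -- p < a
      have hcl : max a (min b p) = a := by
        rw [min_eq_right (hpa.le.trans hab.le), max_eq_left hpa.le]
      rw [hcl, hDa]
      refine (hL1 p).congr_of_eventuallyEq ?_
      filter_upwards [Iio_mem_nhds hpa] with y hy
      rw [hg y, if_pos (le_of_lt hy)]
    · -- p = a
      have hcl : max a (min b p) = a := by
        rw [hpa, min_eq_right (le_of_lt hab), max_eq_left le_rfl]
      rw [hcl]
      rw [hpa] at hp0 hp1 ⊢
      refine st12_glue (f₁ := fun y : ℝ => α * y * (c - e)) (f₂ := st12mid α c d)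
        ?_ ?_ ?_ ?_ ?_ ?_
      · exact (show HasDerivAt (fun y : ℝ => α * y * (c - e)) (st12D α c d a) a by
          rw [hDa]; exact hL1 a).hasDerivWithinAt
      · exact (st12_hasDerivAt_mid α c d a hp0 hp1).hasDerivWithinAt
      · filter_upwards [self_mem_nhdsWithin] with y hy
        rw [hg y, if_pos (Set.mem_Iic.mp hy)]
      · filter_upwards [Ico_mem_nhdsGE hab] with y hy
        rcases eq_or_lt_of_le hy.1 with h | h
        · rw [hg y, ← h, if_pos le_rfl]
          exact val_a
        · rw [hg y, if_neg (not_le.2 h), if_pos hy.2.le]; rfl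
      · rw [hg a, if_pos le_rfl]
      · rw [hg a, if_pos le_rfl]; exact val_a
    · rcases lt_trichotomy p b with hpb | hpb | hpb
      · -- a < p < b
        have hcl : max a (min b p) = p := by
          rw [min_eq_right hpb.le, max_eq_right hpa.le]
        rw [hcl]
        refine (st12_hasDerivAt_mid α c d p hp0 hp1).congr_of_eventuallyEq ?_
        filter_upwards [Ioo_mem_nhds hpa hpb] with y hy
        rw [hg y, if_neg (not_le.2 hy.1), if_pos hy.2.le]; rfl
      · -- p = b
        have hcl : max a (min b p) = b := by
          rw [hpb, min_eq_left le_rfl, max_eq_right hab.le]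
        rw [hcl]
        rw [hpb] at hp0 hp1 ⊢
        refine st12_glue (f₁ := st12mid α c d) (f₂ := fun y : ℝ => α * (1 - y) * (d - f))
          ?_ ?_ ?_ ?_ ?_ ?_
        · exact (st12_hasDerivAt_mid α c d b hp0 hp1).hasDerivWithinAt
        · refine (show HasDerivAt (fun y : ℝ => α * (1 - y) * (d - f))
            (st12D α c d b) b from ?_).hasDerivWithinAt
          rw [hDb, show α * (f - d) = -(α * (d - f)) by ring]
          exact hL2 b
        · filter_upwards [Ioc_mem_nhdsLE hab] with y hy
          rw [hg y, if_neg (not_le.2 hy.1), if_pos hy.2]; rfl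
        · filter_upwards [self_mem_nhdsWithin] with y hy
          rcases eq_or_lt_of_le (Set.mem_Ici.mp hy) with h | h
          · rw [hg y, ← h, if_neg (not_le.2 hab), if_pos le_rfl]
            exact val_b
          · rw [hg y, if_neg (by push_neg; linarith : ¬ y ≤ a), if_neg (not_le.2 h)]
        · rw [hg b, if_neg (not_le.2 hab), if_pos le_rfl]; rfl
        · rw [hg b, if_neg (not_le.2 hab), if_pos le_rfl]; exact val_b
      · -- b < p
        have hcl : max a (min b p) = b := by
          rw [min_eq_left hpb.le, max_eq_right hab.le]
        rw [hcl, hDb, show α * (f - d) = -(α * (d - f)) by ring]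
        refine (hL2 p).congr_of_eventuallyEq ?_
        filter_upwards [Ioi_mem_nhds hpb] with y hy
        have hya : ¬ y ≤ a := by simp only [Set.mem_Ioi] at hy; push_neg; linarith
        have hyb : ¬ y ≤ b := by simp only [Set.mem_Ioi] at hy; push_neg; linarith
        rw [hg y, if_neg hya, if_neg hyb]
  -- deriv g agrees with the clamped D on (0,1)
  have hderiv : ∀ p ∈ Set.Ioo (0:ℝ) 1, deriv g p = st12D α c d (max a (min b p)) :=
    fun p hp => (key p hp).deriv
  -- monotonicity of D on (0,1)
  have hDmono : ∀ x y : ℝ, 0 < x → x ≤ y → y < 1 → st12D α c d x ≤ st12D α c d y := by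
    intro x y hx hxy hy1
    have hx1 : x < 1 := lt_of_le_of_lt hxy hy1
    have hy0 : 0 < y := lt_of_lt_of_le hx hxy
    have h1 : Real.sqrt (x / (1 - x)) ≤ Real.sqrt (y / (1 - y)) := by
      apply Real.sqrt_le_sqrt
      rw [div_le_div_iff₀ (by linarith) (by linarith)]
      nlinarith
    have h2 : Real.sqrt ((1 - y) / y) ≤ Real.sqrt ((1 - x) / x) := by
      apply Real.sqrt_le_sqrt
      rw [div_le_div_iff₀ hy0 hx]
      nlinarith
    simp only [st12D]
    apply mul_le_mul_of_nonneg_left _ hα.le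
    linarith
  -- clamp facts
  have hclamp_mem : ∀ x : ℝ, max a (min b x) ∈ Set.Icc a b := fun x =>
    ⟨le_max_left _ _, max_le hab.le (min_le_left _ _)⟩
  have hclamp_mono : ∀ x y : ℝ, x ≤ y → max a (min b x) ≤ max a (min b y) := fun x y h =>
    max_le_max le_rfl (min_le_min le_rfl h)
  have hmonoderiv : MonotoneOn (deriv g) (Set.Ioo (0:ℝ) 1) := by
    intro x hx y hy hxy
    rw [hderiv x hx, hderiv y hy]
    exact hDmono _ _ (lt_of_lt_of_le ha (hclamp_mem x).1)
      (hclamp_mono x y hxy) (lt_of_le_of_lt (hclamp_mem y).2 hb)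
  -- continuity of g
  have hgfun : g = fun p => if p ≤ a then α * p * (c - e)
      else if p ≤ b then α * (-2 * Real.sqrt (p * (1 - p)) + p * c + (1 - p) * d)
      else α * (1 - p) * (d - f) := funext hg
  have hcont : Continuous g := by
    rw [hgfun]
    have hB2 : Continuous fun p : ℝ =>
        α * (-2 * Real.sqrt (p * (1 - p)) + p * c + (1 - p) * d) := by
      apply continuous_const.mul
      apply Continuous.add
      apply Continuous.add
      · exact continuous_const.mul
          (Real.continuous_sqrt.comp (continuous_id.mul (continuous_const.sub continuous_id)))
      · exact continuous_id.mul continuous_const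
      · exact (continuous_const.sub continuous_id).mul continuous_const
    have hB3 : Continuous fun p : ℝ => α * (1 - p) * (d - f) :=
      (continuous_const.mul (continuous_const.sub continuous_id)).mul continuous_const
    have hinner : Continuous fun p : ℝ => if p ≤ b then
        α * (-2 * Real.sqrt (p * (1 - p)) + p * c + (1 - p) * d)
        else α * (1 - p) * (d - f) := by
      apply Continuous.if_le hB2 hB3 continuous_id continuous_const
      intro x hx
      simp only [id_eq] at hx
      subst hx
      exact val_b
    apply Continuous.if_le ((continuous_const.mul continuous_id).mul continuous_const)
      hinner continuous_id continuous_const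
    intro x hx
    simp only [id_eq] at hx
    subst hx
    rw [if_pos hab.le]
    exact val_a
  have hdiff : DifferentiableOn ℝ g (Set.Ioo (0:ℝ) 1) :=
    fun p hp => ((key p hp).differentiableAt).differentiableWithinAt
  -- continuity of deriv g on (0,1)
  have hDcont : ContinuousOn (st12D α c d) (Set.Ioo (0:ℝ) 1) := by
    rintro p ⟨hp0, hp1⟩
    apply ContinuousAt.continuousWithinAt
    have h1 : ContinuousAt (fun x : ℝ => x / (1 - x)) p :=
      continuousAt_id.div (continuousAt_const.sub continuousAt_id)
        (by show (1:ℝ) - p ≠ 0; intro h; linarith [h])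
    have h2 : ContinuousAt (fun x : ℝ => (1 - x) / x) p :=
      (continuousAt_const.sub continuousAt_id).div continuousAt_id (ne_of_gt hp0)
    show ContinuousAt
      (fun x : ℝ => α * (Real.sqrt (x/(1 - x)) - Real.sqrt ((1 - x)/x) + c - d)) p
    exact continuousAt_const.mul (((h1.sqrt.sub h2.sqrt).add continuousAt_const).sub continuousAt_const)
  have hclcont : Continuous fun x : ℝ => max a (min b x) :=
    continuous_const.max (continuous_const.min continuous_id)
  have hcontderiv : ContinuousOn (deriv g) (Set.Ioo (0:ℝ) 1) := by
    refine ContinuousOn.congr ?_ (fun x hx => hderiv x hx)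
    exact ContinuousOn.comp (g := st12D α c d) (f := fun x : ℝ => max a (min b x))
      hDcont hclcont.continuousOn
      (fun x hx => ⟨lt_of_lt_of_le ha (hclamp_mem x).1, lt_of_le_of_lt (hclamp_mem x).2 hb⟩)
  refine ⟨?_, ?_, ?_⟩
  · -- convexity
    apply MonotoneOn.convexOn_of_deriv (convex_Icc 0 1) hcont.continuousOn
    · rw [interior_Icc]; exact hdiff
    · rw [interior_Icc]; exact hmonoderiv
  · -- C^1
    have h := (contDiffOn_succ_iff_deriv_of_isOpen (n := 0) isOpen_Ioo
      (f := g)).2 ⟨hdiff, by simp, contDiffOn_zero.2 hcontderiv⟩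
    simpa using h
  · -- invariant
    rintro p ⟨hp0, hp1⟩
    rw [hderiv p ⟨hp0, hp1⟩, hg p]
    rcases le_or_gt p a with hpa | hpa
    · rw [if_pos hpa, min_eq_right (hpa.trans hab.le), max_eq_left hpa, hDa]
      linear_combination α ^ 2 * hed
    · rcases le_or_gt p b with hpb | hpb
      · rw [if_neg (not_le.2 hpa), if_pos hpb, min_eq_right hpb, max_eq_right hpa.le]
        have hs : 0 < Real.sqrt (p * (1 - p)) := Real.sqrt_pos.2 (by nlinarith)
        have hs2 : Real.sqrt (p * (1 - p)) ^ 2 = p * (1 - p) := Real.sq_sqrt (by nlinarith)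
        rw [st12D, st12_sqrt_ratio p hp0 hp1, st12_sqrt_ratio' p hp0 hp1]
        exact st12_mid_inv α c d p _ (ne_of_gt hs) hs2
      · rw [if_neg (by push_neg; linarith : ¬ p ≤ a), if_neg (not_le.2 hpb),
          min_eq_left hpb.le, max_eq_right hab.le, hDb]
        linear_combination α ^ 2 * hcf
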